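/- With I_λ as in the constrained minimization problem, for all λ > 0 and m > 1 one has I_{mλ} < m · I_λ. -/

import Mathlib

open MeasureTheory

/-- Membership in the Sobolev space `H¹(ℝ)` (for differentiable representatives). -/
def H1 (f : ℝ → ℝ) : Prop :=
  Differentiable ℝ f ∧ MemLp f 2 (volume : Measure ℝ) ∧
    MemLp (deriv f) 2 (volume : Measure ℝ)

/-- The constraint set `A_λ`, encoded via the values of the functional `K` on it. -/
def Kvalues (N : ℕ) (σ γ cτ β : ℝ) (α : Fin N → ℝ) (lam : ℝ) : Set ℝ :=
  { k : ℝ |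
    ∃ f : Fin N → ℝ → ℝ, ∃ g : ℝ → ℝ,
      (∀ j, H1 (f j)) ∧ H1 g ∧
      (∫ x : ℝ, (β / 3 * g x ^ 3 + (∑ j, α j * f j x ^ 2) * g x)) = lam ∧
      k = (∑ j, ∫ x : ℝ, (deriv (f j) x ^ 2 + σ * f j x ^ 2))
          + ∫ x : ℝ, (γ * deriv g x ^ 2 + cτ * g x ^ 2) }

/-- The infimum `I_λ` of `K` over the constraint set. -/
noncomputable def Ifun (N : ℕ) (σ γ cτ β : ℝ) (α : Fin N → ℝ) (lam : ℝ) : ℝ :=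
  sInf (Kvalues N σ γ cτ β α lam)

lemma H1_const_mul (c : ℝ) {f : ℝ → ℝ} (hf : H1 f) : H1 (fun x => c * f x) := by
  obtain ⟨hd, hm1, hm2⟩ := hf
  refine ⟨hd.const_mul c, hm1.const_mul c, ?_⟩
  have : deriv (fun x => c * f x) = fun x => c * deriv f x := by
    funext x; exact deriv_const_mul c (hd x)
  rw [this]
  exact hm2.const_mul c

lemma Kvalues_nonneg (N : ℕ) (σ γ cτ β : ℝ) (α : Fin N → ℝ) (lam : ℝ)
    (hσ : 0 < σ) (hγ : 0 < γ) (hc : 0 < cτ) {k : ℝ}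
    (hk : k ∈ Kvalues N σ γ cτ β α lam) : 0 ≤ k := by
  obtain ⟨f, g, _, _, _, hk⟩ := hk
  rw [hk]
  refine add_nonneg (Finset.sum_nonneg fun j _ => ?_) ?_
  · exact integral_nonneg fun x => add_nonneg (sq_nonneg _)
      (mul_nonneg hσ.le (sq_nonneg _))
  · exact integral_nonneg fun x => add_nonneg (mul_nonneg hγ.le (sq_nonneg _))
      (mul_nonneg hc.le (sq_nonneg _))

lemma Kvalues_scale (N : ℕ) (σ γ cτ β : ℝ) (α : Fin N → ℝ) (lam : ℝ)
    (c : ℝ) {k : ℝ} (hk : k ∈ Kvalues N σ γ cτ β α lam) :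
    c ^ 2 * k ∈ Kvalues N σ γ cτ β α (c ^ 3 * lam) := by
  obtain ⟨f, g, hf, hg, hcon, hkval⟩ := hk
  refine ⟨fun j => fun x => c * f j x, fun x => c * g x,
    fun j => H1_const_mul c (hf j), H1_const_mul c hg, ?_, ?_⟩
  · have heq : ∀ x : ℝ,
        (β / 3 * (c * g x) ^ 3 + (∑ j, α j * (c * f j x) ^ 2) * (c * g x))
        = c ^ 3 * (β / 3 * g x ^ 3 + (∑ j, α j * f j x ^ 2) * g x) := by
      intro x
      have hsum : (∑ j, α j * (c * f j x) ^ 2) = c ^ 2 * ∑ j, α j * f j x ^ 2 := by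
        rw [Finset.mul_sum]
        exact Finset.sum_congr rfl fun j _ => by ring
      rw [hsum]; ring
    simp only [heq]
    rw [integral_const_mul, hcon]
  · have hderiv : ∀ (h : ℝ → ℝ), Differentiable ℝ h →
        deriv (fun x => c * h x) = fun x => c * deriv h x := by
      intro h hd; funext x; exact deriv_const_mul c (hd x)
    have hterm : ∀ j : Fin N,
        (∫ x : ℝ, (deriv (fun x => c * f j x) x ^ 2 + σ * (c * f j x) ^ 2))
        = c ^ 2 * ∫ x : ℝ, (deriv (f j) x ^ 2 + σ * f j x ^ 2) := by
      intro j
      rw [hderiv (f j) (hf j).1, ← integral_const_mul]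
      exact integral_congr_ae (Filter.Eventually.of_forall fun x => by ring)
    have hterm2 :
        (∫ x : ℝ, (γ * deriv (fun x => c * g x) x ^ 2 + cτ * (c * g x) ^ 2))
        = c ^ 2 * ∫ x : ℝ, (γ * deriv g x ^ 2 + cτ * g x ^ 2) := by
      rw [hderiv g hg.1, ← integral_const_mul]
      exact integral_congr_ae (Filter.Eventually.of_forall fun x => by ring)
    simp only [hterm, hterm2, ← Finset.mul_sum, hkval]
    ring

theorem stmt_5 (N : ℕ) (σ γ cτ β : ℝ) (α : Fin N → ℝ)
    (hσ : 0 < σ) (hγ : 0 < γ) (hc : 0 < cτ) (hβ : 0 ≤ β) (hα : ∀ j, 0 < α j)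
    (hne : ∀ lam : ℝ, 0 < lam → (Kvalues N σ γ cτ β α lam).Nonempty)
    (hpos : ∀ lam : ℝ, 0 < lam → 0 < Ifun N σ γ cτ β α lam)
    (lam m : ℝ) (hlam : 0 < lam) (hm : 1 < m) :
    Ifun N σ γ cτ β α (m * lam) < m * Ifun N σ γ cτ β α lam := by
  have hm0 : (0 : ℝ) < m := lt_trans one_pos hm
  set c : ℝ := m ^ ((1 : ℝ) / 3) with hcdef
  have hc3 : c ^ 3 = m := by
    rw [hcdef, ← Real.rpow_natCast (m ^ ((1:ℝ)/3)) 3, ← Real.rpow_mul hm0.le]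
    norm_num
  have hc2 : c ^ 2 = m ^ ((2 : ℝ) / 3) := by
    rw [hcdef, ← Real.rpow_natCast (m ^ ((1:ℝ)/3)) 2, ← Real.rpow_mul hm0.le]
    norm_num
  have hc2lt : c ^ 2 < m := by
    rw [hc2]
    calc m ^ ((2:ℝ)/3) < m ^ (1:ℝ) := by
          apply Real.rpow_lt_rpow_left_iff hm |>.mpr; norm_num
      _ = m := Real.rpow_one m
  -- I(mλ) ≤ c² k for every k ∈ Kvalues λ
  have hle : ∀ k ∈ Kvalues N σ γ cτ β α lam,
      Ifun N σ γ cτ β α (m * lam) ≤ c ^ 2 * k := by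
    intro k hk
    have := Kvalues_scale N σ γ cτ β α lam c hk
    rw [hc3] at this
    exact csInf_le ⟨0, fun y hy => Kvalues_nonneg N σ γ cτ β α (m * lam) hσ hγ hc hy⟩ this
  have hc2pos : (0 : ℝ) < c ^ 2 := by
    rw [hc2]; exact Real.rpow_pos_of_pos hm0 _
  have key : Ifun N σ γ cτ β α (m * lam) ≤ c ^ 2 * Ifun N σ γ cτ β α lam := by
    have : Ifun N σ γ cτ β α (m * lam) / c ^ 2 ≤ Ifun N σ γ cτ β α lam := by
      apply le_csInf (hne lam hlam)
      intro k hk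
      exact (div_le_iff₀ hc2pos).mpr (by linarith [hle k hk])
    calc Ifun N σ γ cτ β α (m * lam)
        = c ^ 2 * (Ifun N σ γ cτ β α (m * lam) / c ^ 2) := by
          rw [mul_div_assoc', mul_div_cancel_left₀ _ hc2pos.ne']
      _ ≤ c ^ 2 * Ifun N σ γ cτ β α lam := by
          exact mul_le_mul_of_nonneg_left this hc2pos.le
  exact lt_of_le_of_lt key (mul_lt_mul_of_pos_right hc2lt (hpos lam hlam))
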